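/- Let f be a natural number and let V : ℕ → ℕ be a finitely supported function with V k = 0 for all k < 3. Assume (as integers) V 3 = 8 + ∑_{k ≥ 4} (k − 4)·(V k) and f ≥ 2·(V 3). Then (f : ℤ) ≥ 16 + ∑_{k ≥ 5} 2·(k − 4)·(V k); in particular f ≥ 16, and if f = 16 then V k = 0 for all k ≥ 5. -/
import Mathlib


open Finset

/-- Arithmetic core of Lemma 3.11: if `V 3 = 8 + ∑_{k ≥ 4} (k-4) V k` and `f ≥ 2 V 3`,
then `f ≥ 16 + ∑_{k ≥ 5} 2(k-4) V k`, hence `f ≥ 16`, and `f = 16` forces no vertices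
of degree `≥ 5`. -/
theorem stmt_5 (f : ℕ) (V : ℕ →₀ ℕ) (hV : ∀ k < 3, V k = 0)
    (h1 : (V 3 : ℤ) = 8 + ∑ k ∈ V.support.filter (fun k => 4 ≤ k), ((k : ℤ) - 4) * (V k : ℤ))
    (h2 : 2 * V 3 ≤ f) :
    16 + ∑ k ∈ V.support.filter (fun k => 5 ≤ k), 2 * ((k : ℤ) - 4) * (V k : ℤ) ≤ (f : ℤ) ∧
    16 ≤ f ∧ (f = 16 → ∀ k, 5 ≤ k → V k = 0) := by
  have hsub : V.support.filter (fun k => 5 ≤ k) ⊆ V.support.filter (fun k => 4 ≤ k) := by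
    intro x hx
    simp only [mem_filter] at hx ⊢
    exact ⟨hx.1, by omega⟩
  have hsum : ∑ k ∈ V.support.filter (fun k => 4 ≤ k), ((k : ℤ) - 4) * (V k : ℤ)
      = ∑ k ∈ V.support.filter (fun k => 5 ≤ k), ((k : ℤ) - 4) * (V k : ℤ) := by
    refine (Finset.sum_subset hsub ?_).symm
    intro x hx hx'
    simp only [mem_filter] at hx hx'
    have hx5 : ¬ 5 ≤ x := fun h => hx' ⟨hx.1, h⟩
    have : x = 4 := by omega
    subst this
    norm_num
  have hterm : ∀ k ∈ V.support.filter (fun k => 5 ≤ k),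
      (0 : ℤ) ≤ 2 * ((k : ℤ) - 4) * (V k : ℤ) := by
    intro k hk
    simp only [mem_filter] at hk
    have h5 : (5 : ℤ) ≤ (k : ℤ) := by exact_mod_cast hk.2
    have hv : (0 : ℤ) ≤ (V k : ℤ) := Int.natCast_nonneg _
    nlinarith
  have hkey : 16 + ∑ k ∈ V.support.filter (fun k => 5 ≤ k),
      2 * ((k : ℤ) - 4) * (V k : ℤ) ≤ (f : ℤ) := by
    have h2' : (2 : ℤ) * (V 3 : ℤ) ≤ (f : ℤ) := by exact_mod_cast h2
    have : (2 : ℤ) * (V 3 : ℤ)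
        = 16 + ∑ k ∈ V.support.filter (fun k => 5 ≤ k), 2 * ((k : ℤ) - 4) * (V k : ℤ) := by
      rw [h1, hsum, mul_add, Finset.mul_sum]
      norm_num
      exact Finset.sum_congr rfl fun k _ => by ring
    linarith
  have hsnn : (0 : ℤ) ≤ ∑ k ∈ V.support.filter (fun k => 5 ≤ k),
      2 * ((k : ℤ) - 4) * (V k : ℤ) := Finset.sum_nonneg hterm
  refine ⟨hkey, by exact_mod_cast (by linarith : (16 : ℤ) ≤ (f : ℤ)), ?_⟩
  intro hf k hk
  by_contra hV0
  have hkmem : k ∈ V.support.filter (fun k => 5 ≤ k) := by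
    simp [Finsupp.mem_support_iff, hV0, hk]
  have hpos : (0 : ℤ) < 2 * ((k : ℤ) - 4) * (V k : ℤ) := by
    have h5 : (5 : ℤ) ≤ (k : ℤ) := by exact_mod_cast hk
    have hVpos : (0 : ℤ) < (V k : ℤ) := by
      exact_mod_cast Nat.pos_of_ne_zero hV0
    nlinarith
  have : (0 : ℤ) < ∑ j ∈ V.support.filter (fun k => 5 ≤ k),
      2 * ((j : ℤ) - 4) * (V j : ℤ) := by
    refine Finset.sum_pos' hterm ⟨k, hkmem, hpos⟩
  subst hf
  push_cast at hkey
  linarith
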